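/- For every n ≥ 0, the kP-module E_n is isomorphic, in the functor category P ⥤ ModuleCat k, to the coproduct, taken over all n-chains c of P, of the functors k[Hom_P(c(n), −)]; in particular, each E_n is a free kP-module with basis given by the n-chains of P, the chain c corresponding to a basis element at the object c(n) (its apex). -/

import Mathlib

open CategoryTheory CategoryTheory.Limits

variable (k : Type) [CommRing k] (P : Type) [PartialOrder P]

/-- The functor sending `a ∈ P` to the set of `n`-chains of `P` with apex `≤ a`,
i.e. strictly increasing maps `c : {0 < 1 < … < n} → P` with `c(n) ≤ a`. -/
def chainsSetFunctor (n : ℕ) : P ⥤ Type where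
  obj a := {c : Fin (n + 1) → P // StrictMono c ∧ c (Fin.last n) ≤ a}
  map {a b} h := TypeCat.ofHom fun c => ⟨c.1, c.2.1, c.2.2.trans (leOfHom h)⟩

/-- The `kP`-module `E_n` of `n`-chains of the order complex of `P`:
`E_n(a)` is the free `k`-module on the set of `n`-chains of `P` with apex `≤ a`. -/
noncomputable def En (n : ℕ) : P ⥤ ModuleCat k :=
  chainsSetFunctor P n ⋙ ModuleCat.free k

/-- The functor `k[Hom_P(α,−)] : P ⥤ ModuleCat k`, sending `β ∈ P` to
the free `k`-module on `Hom_P(α,β)` (so `k` if `α ≤ β` and `0` otherwise). -/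
noncomputable def freeShiftP (α : P) : P ⥤ ModuleCat k :=
  coyoneda.obj (Opposite.op α) ⋙ ModuleCat.free k

/-- The family of functors `k[Hom_P(c(n),−)]` indexed by the `n`-chains `c` of `P`. -/
noncomputable def apexFamily (n : ℕ) (c : {c : Fin (n + 1) → P // StrictMono c}) :
    P ⥤ ModuleCat k :=
  freeShiftP k P (c.1 (Fin.last n))

def chainInjSet (n : ℕ) (c : {c : Fin (n + 1) → P // StrictMono c}) :
    coyoneda.obj (Opposite.op (c.1 (Fin.last n))) ⟶ chainsSetFunctor P n where
  app b := TypeCat.ofHom fun h => ⟨c.1, c.2, leOfHom h⟩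
  naturality a b h := rfl

noncomputable def chainInj (n : ℕ) (c : {c : Fin (n + 1) → P // StrictMono c}) :
    apexFamily k P n c ⟶ En k P n :=
  Functor.whiskerRight (chainInjSet P n c) (ModuleCat.free k)

noncomputable def chainDesc (n : ℕ) (t : Cofan (apexFamily k P n)) :
    En k P n ⟶ t.pt where
  app a := ModuleCat.freeDesc
    (TypeCat.ofHom fun s : (chainsSetFunctor P n).obj a =>
      (t.inj ⟨s.1, s.2.1⟩).app a (ModuleCat.freeMk (homOfLE s.2.2)))
  naturality a b h := by
    apply ModuleCat.free_hom_ext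
    intro s
    have h2 : ((t.inj ⟨s.1, s.2.1⟩).app b)
          (((ModuleCat.free k).map (TypeCat.ofHom fun g : _ ⟶ a => g ≫ h)) (ModuleCat.freeMk (homOfLE s.2.2))) =
        (t.pt.map h) (((t.inj ⟨s.1, s.2.1⟩).app a) (ModuleCat.freeMk (homOfLE s.2.2))) :=
      ConcreteCategory.congr_hom ((t.inj ⟨s.1, s.2.1⟩).naturality h)
        (ModuleCat.freeMk (homOfLE s.2.2) : (apexFamily k P n ⟨s.1, s.2.1⟩).obj a)
    rw [ModuleCat.free_map_apply] at h2
    show (ModuleCat.freeDesc _)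
        (((ModuleCat.free k).map ((chainsSetFunctor P n).map h)) (ModuleCat.freeMk s)) =
      (t.pt.map h) ((ModuleCat.freeDesc _) (ModuleCat.freeMk s))
    rw [ModuleCat.free_map_apply, ModuleCat.freeDesc_apply, ModuleCat.freeDesc_apply]
    convert h2.symm using 2
    exact h2
    exact h2.symm

noncomputable def chainCofan (n : ℕ) : Cofan (apexFamily k P n) :=
  Cofan.mk (En k P n) (chainInj k P n)

noncomputable def chainCofanIsColimit (n : ℕ) : IsColimit (chainCofan k P n) := by
  refine mkCofanColimit _ (chainDesc k P n) ?_ ?_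
  · intro t c
    apply NatTrans.ext
    funext a
    apply ModuleCat.free_hom_ext
    intro f
    show (chainDesc k P n t).app a
        (((ModuleCat.free k).map ((chainInjSet P n c).app a)) (ModuleCat.freeMk f)) =
      (t.inj c).app a (ModuleCat.freeMk f)
    rw [ModuleCat.free_map_apply]
    show ModuleCat.freeDesc _ (ModuleCat.freeMk _) = _
    rw [ModuleCat.freeDesc_apply]
    rfl
  · intro t m hm
    apply NatTrans.ext
    funext a
    apply ModuleCat.free_hom_ext
    intro s
    have h1 : (chainInj k P n ⟨s.1, s.2.1⟩ ≫ m).app a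
          (ModuleCat.freeMk (homOfLE s.2.2)) =
        (t.inj ⟨s.1, s.2.1⟩).app a (ModuleCat.freeMk (homOfLE s.2.2)) :=
      congrArg (fun (g : apexFamily k P n ⟨s.1, s.2.1⟩ ⟶ t.pt) =>
        g.app a (ModuleCat.freeMk (homOfLE s.2.2))) (hm ⟨s.1, s.2.1⟩)
    have h2 : (chainInj k P n ⟨s.1, s.2.1⟩ ≫ m).app a (ModuleCat.freeMk (homOfLE s.2.2)) =
        m.app a (ModuleCat.freeMk s) := by
      show m.app a (((ModuleCat.free k).map ((chainInjSet P n ⟨s.1, s.2.1⟩).app a))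
        (ModuleCat.freeMk (homOfLE s.2.2))) = _
      rw [ModuleCat.free_map_apply]
      exact congrArg (fun x => (m.app a) (ModuleCat.freeMk x)) (Subtype.ext rfl)
    show m.app a (ModuleCat.freeMk s) = ModuleCat.freeDesc _ (ModuleCat.freeMk s)
    rw [ModuleCat.freeDesc_apply, ← h2]
    exact h1

/-- For every `n ≥ 0`, the `kP`-module `E_n` is isomorphic, in the
functor category `P ⥤ ModuleCat k`, to the coproduct, taken over all `n`-chains `c`
of `P`, of the functors `k[Hom_P(c(n), −)]`; in particular, each `E_n` is a free
`kP`-module with basis given by the `n`-chains of `P`, the chain `c` corresponding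
to a basis element at the object `c(n)` (its apex). -/
theorem En_iso_coproduct_of_corepresentables (n : ℕ) :
    ∃ e : (∐ apexFamily k P n) ≅ En k P n,
      ∀ c : {c : Fin (n + 1) → P // StrictMono c},
        (e.hom.app (c.1 (Fin.last n)))
            ((Sigma.ι (apexFamily k P n) c).app (c.1 (Fin.last n))
              (Finsupp.single (𝟙 (c.1 (Fin.last n))) (1 : k))) =
          Finsupp.single ⟨c.1, c.2, le_refl _⟩ (1 : k) := by
  refine ⟨colimit.isoColimitCocone ⟨chainCofan k P n, chainCofanIsColimit k P n⟩, fun c => ?_⟩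
  have h1 : Sigma.ι (apexFamily k P n) c ≫
      (colimit.isoColimitCocone ⟨chainCofan k P n, chainCofanIsColimit k P n⟩).hom =
      chainInj k P n c := colimit.isoColimitCocone_ι_hom _ _
  have h2 := congrArg (fun (g : apexFamily k P n c ⟶ En k P n) =>
    g.app (c.1 (Fin.last n)) (ModuleCat.freeMk (𝟙 (c.1 (Fin.last n))))) h1
  simp only [NatTrans.comp_app, ModuleCat.hom_comp, LinearMap.comp_apply] at h2
  refine h2.trans ?_
  show ((ModuleCat.free k).map ((chainInjSet P n c).app _)) (ModuleCat.freeMk _) = _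
  rw [ModuleCat.free_map_apply]
  rfl
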